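/- Let h > 0 and let f, g : [0,1] → ℂ be continuous. Define the O_h^(1)-convolution (f ⋆ g)(x) = ∫_0^x f(x−t) g(t) dt + (1/h)·∫_x^1 f(1+x−t) g(t) dt for x ∈ [0,1]. Then for every j ∈ ℤ one has ∫_0^1 (f ⋆ g)(x)·h^{−x} e^{−2πi j x} dx = (∫_0^1 f(x)·h^{−x} e^{−2πi j x} dx)·(∫_0^1 g(x)·h^{−x} e^{−2πi j x} dx); that is, the L-Fourier coefficients of f ⋆ g are the products of those of f and g. -/

import Mathlib

open Complex MeasureTheory Set

noncomputable section

/-- The `O_h^(1)`-convolution of two functions on `[0,1]`. -/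
def LConv (h : ℝ) (f g : ℝ → ℂ) (x : ℝ) : ℂ :=
  (∫ t in (0:ℝ)..x, f (x - t) * g t) +
    (1 / (h : ℂ)) * ∫ t in x..(1:ℝ), f (1 + x - t) * g t

/-- The `L`-Fourier coefficient `f̂(j) = ∫_0^1 f(x) h^{-x} e^{-2π i j x} dx`. -/
def LFourier (h : ℝ) (f : ℝ → ℂ) (j : ℤ) : ℂ :=
  ∫ x in (0:ℝ)..1,
    f x * Complex.exp (-((x : ℂ) * Real.log h)) *
      Complex.exp (-(2 * Real.pi * Complex.I * (j : ℂ) * (x : ℂ)))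

namespace Stmt4Aux

open intervalIntegral

/-- The exponential weight. -/
def E (h : ℝ) (j : ℤ) (x : ℝ) : ℂ :=
  Complex.exp (-((x:ℂ) * Real.log h)) * Complex.exp (-(2*Real.pi*Complex.I*(j:ℂ)*x))

lemma E_add (h : ℝ) (j : ℤ) (x y : ℝ) : E h j (x+y) = E h j x * E h j y := by
  simp only [E, ← Complex.exp_add]
  congr 1
  push_cast
  ring

lemma E_cont (h : ℝ) (j : ℤ) : Continuous (E h j) := by
  unfold E; continuity

lemma E_one (h : ℝ) (hh : 0 < h) (j : ℤ) : E h j 1 = 1/h := by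
  have h1 : Complex.exp (-(((1:ℝ):ℂ) * Real.log h)) = 1/h := by
    rw [Complex.ofReal_one, one_mul, Complex.exp_neg, ← Complex.ofReal_exp, Real.exp_log hh]
    simp
  have harg : (-(2*(Real.pi:ℂ)*Complex.I*(j:ℂ)*((1:ℝ):ℂ)) : ℂ)
      = ((-j : ℤ):ℂ) * (2*Real.pi*Complex.I) := by
    push_cast; ring
  have h2 : Complex.exp (-(2*(Real.pi:ℂ)*Complex.I*(j:ℂ)*((1:ℝ):ℂ))) = 1 := by
    rw [harg, Complex.exp_int_mul_two_pi_mul_I]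
  rw [E, h1, h2, mul_one]

lemma E_neg_one (h : ℝ) (hh : 0 < h) (j : ℤ) : E h j (-1) = h := by
  have h0 : E h j 0 = 1 := by simp [E]
  have := E_add h j 1 (-1)
  rw [add_neg_cancel, h0, E_one h hh j] at this
  have hne : (h:ℂ) ≠ 0 := by exact_mod_cast hh.ne'
  field_simp at this
  linear_combination -this

/-- The kernel for the double integral. -/
def K (h : ℝ) (j : ℤ) (F G : ℝ → ℂ) (x t : ℝ) : ℂ :=
  if t ≤ x then F (x-t) * G t * E h j x else (1/(h:ℂ)) * F (1+x-t) * G t * E h j x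

lemma LFourier_eq_E (h : ℝ) (f : ℝ → ℂ) (j : ℤ) :
    LFourier h f j = ∫ x in (0:ℝ)..1, f x * E h j x := by
  simp only [LFourier, E, mul_assoc]

/-- The inner integral (in `x`) of the kernel. -/
lemma inner_int (h : ℝ) (hh : 0 < h) (j : ℤ) (F G : ℝ → ℂ) (hF : Continuous F)
    (hG : Continuous G) (t : ℝ) (ht : t ∈ Icc (0:ℝ) 1) :
    (∫ x in (0:ℝ)..1, K h j F G x t)
      = (∫ u in (0:ℝ)..1, F u * E h j u) * (G t * E h j t) := by
  obtain ⟨ht0, ht1⟩ := ht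
  have hne : (h:ℂ) ≠ 0 := by exact_mod_cast hh.ne'
  set Φ : ℝ → ℂ := fun u => F u * E h j u with hΦ
  have hΦc : Continuous Φ := hF.mul (E_cont h j)
  set c : ℂ := G t * E h j t with hc
  have hpt1 : ∀ x : ℝ, t ≤ x → K h j F G x t = Φ (x - t) * c := by
    intro x htx
    have hE : E h j x = E h j (x - t) * E h j t := by rw [← E_add]; congr 1; ring
    simp only [K, if_pos htx, hE, hΦ, hc]; ring
  have hpt2 : ∀ x : ℝ, x < t → K h j F G x t = Φ (x + (1-t)) * c := by
    intro x hlt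
    have hE : E h j x = E h j (x + (1-t)) * E h j t * E h j (-1) := by
      rw [← E_add, ← E_add]; congr 1; ring
    simp only [K, if_neg (not_le.mpr hlt), hE, E_neg_one h hh j, hΦ, hc,
      show (1:ℝ) + x - t = x + (1-t) by ring]
    field_simp
  have hane : ∀ᵐ x : ℝ, x ≠ t := by
    rw [MeasureTheory.ae_iff]
    simpa using measure_singleton (α := ℝ) t
  have e1 : (∫ x in t..1, K h j F G x t) = ∫ u in (0:ℝ)..(1-t), Φ u * c := by
    rw [integral_congr (μ := volume) (g := fun x => (fun u => Φ u * c) (x - t))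
      (fun x hx => hpt1 x ((uIcc_of_le ht1 ▸ hx).1)),
      integral_comp_sub_right (fun u => Φ u * c) t, sub_self]
  have e2 : (∫ x in (0:ℝ)..t, K h j F G x t) = ∫ u in (1-t)..1, Φ u * c := by
    rw [intervalIntegral.integral_congr_ae (μ := volume)
        (g := fun x => (fun u => Φ u * c) (x + (1-t)))
        (by filter_upwards [hane] with x hxt hx
            exact hpt2 x (lt_of_le_of_ne (uIoc_of_le ht0 ▸ hx).2 hxt)),
      integral_comp_add_right (fun u => Φ u * c) (1-t), zero_add, show t + (1-t) = 1 by ring]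
  have i1 : IntervalIntegrable (fun x => K h j F G x t) volume t 1 := by
    refine (Continuous.intervalIntegrable
      (((hΦc.comp (continuous_id.sub continuous_const)).mul continuous_const)
        : Continuous fun x : ℝ => Φ (x - t) * c) _ _).congr_ae ?_
    filter_upwards [ae_restrict_mem (measurableSet_uIoc (a := t) (b := 1))] with x hx
    exact (hpt1 x (le_of_lt (uIoc_of_le ht1 ▸ hx).1)).symm
  have i2 : IntervalIntegrable (fun x => K h j F G x t) volume 0 t := by
    refine (Continuous.intervalIntegrable
      (((hΦc.comp (continuous_id.add continuous_const)).mul continuous_const)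
        : Continuous fun x : ℝ => Φ (x + (1-t)) * c) _ _).congr_ae ?_
    filter_upwards [ae_restrict_mem (measurableSet_uIoc (a := (0:ℝ)) (b := t)),
      hane.filter_mono (ae_mono Measure.restrict_le_self)] with x hx hxt
    exact (hpt2 x (lt_of_le_of_ne (uIoc_of_le ht0 ▸ hx).2 hxt)).symm
  have e3 : (∫ u in (0:ℝ)..1, Φ u) * c
      = (∫ u in (0:ℝ)..(1-t), Φ u * c) + ∫ u in (1-t)..1, Φ u * c := by
    rw [← intervalIntegral.integral_mul_const,
      ← integral_add_adjacent_intervals (a := (0:ℝ)) (b := 1-t) (c := 1) (f := fun u => Φ u * c)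
        (Continuous.intervalIntegrable (hΦc.mul continuous_const) _ _)
        (Continuous.intervalIntegrable (hΦc.mul continuous_const) _ _)]
  rw [← integral_add_adjacent_intervals i2 i1, e1, e2, e3]
  ring

/-- Integrability of the kernel on the unit square. -/
lemma K_integrable (h : ℝ) (hh : 0 < h) (j : ℤ) (F G : ℝ → ℂ) (hF : Continuous F)
    (hG : Continuous G) (CF CG : ℝ) (hCF : ∀ x, ‖F x‖ ≤ CF) (hCG : ∀ x, ‖G x‖ ≤ CG) :
    Integrable (Function.uncurry (K h j F G))
      ((volume.restrict (Ioc (0:ℝ) 1)).prod (volume.restrict (Ioc (0:ℝ) 1))) := by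
  have hCF0 : 0 ≤ CF := le_trans (norm_nonneg _) (hCF 0)
  have hCG0 : 0 ≤ CG := le_trans (norm_nonneg _) (hCG 0)
  obtain ⟨CE, hCE⟩ := isCompact_Icc.exists_bound_of_continuousOn
    (E_cont h j).continuousOn (s := Icc (0:ℝ) 1)
  have hCE0 : 0 ≤ CE := le_trans (norm_nonneg _) (hCE 0 ⟨le_refl _, zero_le_one⟩)
  have hmeas : Measurable (Function.uncurry (K h j F G)) := by
    apply Measurable.ite (measurableSet_le measurable_snd measurable_fst)
    · exact (((hF.comp (continuous_fst.sub continuous_snd)).mul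
        (hG.comp continuous_snd)).mul ((E_cont h j).comp continuous_fst)).measurable
    · exact ((continuous_const.mul
        (hF.comp ((continuous_const.add continuous_fst).sub continuous_snd))).mul
        (hG.comp continuous_snd)).mul ((E_cont h j).comp continuous_fst) |>.measurable
  have hfin : IsFiniteMeasure
      ((volume.restrict (Ioc (0:ℝ) 1)).prod (volume.restrict (Ioc (0:ℝ) 1))) := by
    constructor
    rw [← Set.univ_prod_univ, Measure.prod_prod]
    simp [Real.volume_Ioc, Measure.restrict_apply_univ]
  refine Integrable.mono' (g := fun _ => max 1 (1/h) * (CF * (CG * CE)))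
    (integrable_const _) hmeas.aestronglyMeasurable ?_
  rw [Measure.prod_restrict]
  filter_upwards [ae_restrict_mem ((measurableSet_Ioc).prod measurableSet_Ioc)] with p hp
  obtain ⟨hpx, hpt⟩ := hp
  have hEx : ‖E h j p.1‖ ≤ CE := hCE p.1 ⟨hpx.1.le, hpx.2⟩
  have h1 : (1:ℝ) ≤ max 1 (1/h) := le_max_left _ _
  have hC0 : 0 ≤ CF * (CG * CE) := mul_nonneg hCF0 (mul_nonneg hCG0 hCE0)
  have hbound : ∀ a : ℝ, ‖F a‖ * ‖G p.2‖ * ‖E h j p.1‖ ≤ CF * (CG * CE) := by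
    intro a
    rw [← mul_assoc CF]
    exact mul_le_mul (mul_le_mul (hCF a) (hCG _) (norm_nonneg _) hCF0) hEx (norm_nonneg _)
      (mul_nonneg hCF0 hCG0)
  rcases le_or_gt p.2 p.1 with hle | hlt
  · rw [Function.uncurry, K, if_pos hle]
    calc ‖F (p.1-p.2) * G p.2 * E h j p.1‖ = ‖F (p.1-p.2)‖ * ‖G p.2‖ * ‖E h j p.1‖ := by
          simp [norm_mul]
      _ ≤ CF * (CG * CE) := hbound _
      _ ≤ max 1 (1/h) * (CF * (CG * CE)) := le_mul_of_one_le_left hC0 h1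
  · rw [Function.uncurry, K, if_neg (not_le.mpr hlt)]
    have hnh : ‖(1/(h:ℂ))‖ = 1/h := by
      rw [norm_div, norm_one, Complex.norm_real, Real.norm_eq_abs, abs_of_pos hh]
    calc ‖1/(h:ℂ) * F (1+p.1-p.2) * G p.2 * E h j p.1‖
        = (1/h) * (‖F (1+p.1-p.2)‖ * ‖G p.2‖ * ‖E h j p.1‖) := by
          simp [norm_mul, hnh, abs_of_pos hh]; ring
      _ ≤ (1/h) * (CF * (CG * CE)) := by
          apply mul_le_mul_of_nonneg_left (hbound _) (by positivity)
      _ ≤ max 1 (1/h) * (CF * (CG * CE)) :=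
          mul_le_mul_of_nonneg_right (le_max_right _ _) hC0

/-- Pointwise identity: the convolution integrand equals the inner `t`-integral of `K`. -/
lemma conv_eq_K (h : ℝ) (hh : 0 < h) (j : ℤ) (F G : ℝ → ℂ) (hF : Continuous F)
    (hG : Continuous G) (x : ℝ) (hx : x ∈ Icc (0:ℝ) 1) :
    LConv h F G x * E h j x = ∫ t in (0:ℝ)..1, K h j F G x t := by
  obtain ⟨hx0, hx1⟩ := hx
  have cA : Continuous fun t : ℝ => F (x - t) * G t * E h j x :=
    ((hF.comp (continuous_const.sub continuous_id)).mul hG).mul continuous_const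
  have cB : Continuous fun t : ℝ => (1/(h:ℂ)) * F (1 + x - t) * G t * E h j x :=
    ((continuous_const.mul
      (hF.comp (continuous_const.sub continuous_id))).mul hG).mul continuous_const
  have iA : IntervalIntegrable (fun t => K h j F G x t) volume 0 x := by
    refine (cA.intervalIntegrable _ _).congr_ae ?_
    filter_upwards [ae_restrict_mem (measurableSet_uIoc (a := (0:ℝ)) (b := x))] with t ht
    rw [uIoc_of_le hx0] at ht
    rw [K, if_pos ht.2]
  have iB : IntervalIntegrable (fun t => K h j F G x t) volume x 1 := by
    refine (cB.intervalIntegrable _ _).congr_ae ?_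
    filter_upwards [ae_restrict_mem (measurableSet_uIoc (a := x) (b := 1))] with t ht
    rw [uIoc_of_le hx1] at ht
    rw [K, if_neg (not_le.mpr ht.1)]
  have eA : (∫ t in (0:ℝ)..x, F (x - t) * G t) * E h j x
      = ∫ t in (0:ℝ)..x, K h j F G x t := by
    rw [← intervalIntegral.integral_mul_const]
    apply integral_congr
    intro t ht
    rw [uIcc_of_le hx0] at ht
    rw [K, if_pos ht.2]
  have eB : (1/(h:ℂ)) * (∫ t in x..(1:ℝ), F (1 + x - t) * G t) * E h j x
      = ∫ t in x..(1:ℝ), K h j F G x t := by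
    rw [mul_assoc, ← intervalIntegral.integral_mul_const, ← intervalIntegral.integral_const_mul]
    apply intervalIntegral.integral_congr_ae
    apply MeasureTheory.ae_of_all
    intro t ht
    rw [uIoc_of_le hx1] at ht
    rw [K, if_neg (not_le.mpr ht.1)]
    ring
  rw [LConv, add_mul, eA, eB, integral_add_adjacent_intervals iA iB]

end Stmt4Aux

open Stmt4Aux

theorem stmt_4 (h : ℝ) (hh : 0 < h) (f g : ℝ → ℂ)
    (hf : ContinuousOn f (Icc 0 1)) (hg : ContinuousOn g (Icc 0 1)) :
    ∀ j : ℤ, LFourier h (LConv h f g) j = LFourier h f j * LFourier h g j := by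
  intro j
  have hproj : ∀ x : ℝ, max 0 (min 1 x) ∈ Icc (0:ℝ) 1 :=
    fun x => ⟨le_max_left _ _, max_le zero_le_one (min_le_left _ _)⟩
  have hclamp : ∀ x ∈ Icc (0:ℝ) 1, max 0 (min 1 x) = x := fun x hx => by
    rw [min_eq_right hx.2, max_eq_right hx.1]
  set F : ℝ → ℂ := fun x => f (max 0 (min 1 x)) with hFdef
  set G : ℝ → ℂ := fun x => g (max 0 (min 1 x)) with hGdef
  have hFc : Continuous F := hf.comp_continuous (continuous_const.max (continuous_const.min continuous_id)) hproj
  have hGc : Continuous G := hg.comp_continuous (continuous_const.max (continuous_const.min continuous_id)) hproj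
  have hFeq : ∀ x ∈ Icc (0:ℝ) 1, F x = f x := fun x hx => by
    simp only [hFdef, hclamp x hx]
  have hGeq : ∀ x ∈ Icc (0:ℝ) 1, G x = g x := fun x hx => by
    simp only [hGdef, hclamp x hx]
  obtain ⟨CF, hCF'⟩ := isCompact_Icc.exists_bound_of_continuousOn hf
  obtain ⟨CG, hCG'⟩ := isCompact_Icc.exists_bound_of_continuousOn hg
  have hCF : ∀ x, ‖F x‖ ≤ CF := fun x => hCF' _ (hproj x)
  have hCG : ∀ x, ‖G x‖ ≤ CG := fun x => hCG' _ (hproj x)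
  -- `LFourier` only depends on values on `[0,1]`
  have hLF : LFourier h F j = LFourier h f j := by
    apply intervalIntegral.integral_congr
    intro x hx
    rw [uIcc_of_le zero_le_one] at hx
    simp only [hFeq x hx]
  have hLG : LFourier h G j = LFourier h g j := by
    apply intervalIntegral.integral_congr
    intro x hx
    rw [uIcc_of_le zero_le_one] at hx
    simp only [hGeq x hx]
  -- The convolutions agree on `[0,1]`
  have hconv : ∀ x ∈ Icc (0:ℝ) 1, LConv h f g x = LConv h F G x := by
    intro x hx
    unfold LConv
    congr 1
    · apply intervalIntegral.integral_congr
      intro t ht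
      rw [uIcc_of_le hx.1] at ht
      show f (x - t) * g t = F (x - t) * G t
      rw [hFeq (x - t) ⟨by linarith [ht.2], by linarith [ht.1, hx.2]⟩,
        hGeq t ⟨ht.1, le_trans ht.2 hx.2⟩]
    · congr 1
      apply intervalIntegral.integral_congr
      intro t ht
      rw [uIcc_of_le hx.2] at ht
      show f (1 + x - t) * g t = F (1 + x - t) * G t
      rw [hFeq (1 + x - t) ⟨by linarith [ht.2, hx.1], by linarith [ht.1]⟩,
        hGeq t ⟨le_trans hx.1 ht.1, ht.2⟩]
  calc LFourier h (LConv h f g) j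
      = ∫ x in (0:ℝ)..1, LConv h f g x * E h j x := LFourier_eq_E h _ j
    _ = ∫ x in (0:ℝ)..1, (∫ t in (0:ℝ)..1, K h j F G x t) := by
        apply intervalIntegral.integral_congr
        intro x hx
        rw [uIcc_of_le zero_le_one] at hx
        show LConv h f g x * E h j x = ∫ t in (0:ℝ)..1, K h j F G x t
        rw [hconv x hx, conv_eq_K h hh j F G hFc hGc x hx]
    _ = ∫ x in Ioc (0:ℝ) 1, ∫ t in Ioc (0:ℝ) 1, K h j F G x t := by
        simp only [intervalIntegral.integral_of_le zero_le_one]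
    _ = ∫ t in Ioc (0:ℝ) 1, ∫ x in Ioc (0:ℝ) 1, K h j F G x t :=
        MeasureTheory.integral_integral_swap
          (K_integrable h hh j F G hFc hGc CF CG hCF hCG)
    _ = ∫ t in Ioc (0:ℝ) 1, (∫ u in (0:ℝ)..1, F u * E h j u) * (G t * E h j t) := by
        apply setIntegral_congr_fun measurableSet_Ioc
        intro t ht
        show (∫ x in Ioc (0:ℝ) 1, K h j F G x t) = _
        rw [← intervalIntegral.integral_of_le zero_le_one]
        exact inner_int h hh j F G hFc hGc t (Ioc_subset_Icc_self ht)
    _ = (∫ u in (0:ℝ)..1, F u * E h j u) * ∫ t in Ioc (0:ℝ) 1, G t * E h j t :=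
        MeasureTheory.integral_const_mul _ _
    _ = LFourier h F j * LFourier h G j := by
        rw [LFourier_eq_E h F j, LFourier_eq_E h G j]
        simp only [intervalIntegral.integral_of_le zero_le_one]
    _ = LFourier h f j * LFourier h g j := by rw [hLF, hLG]
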